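/- arXiv:1201.6528 — 3 statements merged into one kernel-verified Lean document; each statement's English description precedes it below -/
import Mathlib

section
/- Let α be a unit speed curve in E³ with κ > 0, τ nowhere zero, and define β(s) = α(s) + (as+b)T(s) + (cs+d)B(s) + λN(s). Then ⟨β'(s), N(s)⟩ = 0 for all s if and only if κ(s)/τ(s) = (cs+d)/(as+b) for all s (where as+b ≠ 0). -/
abbrev E3 := EuclideanSpace ℝ (Fin 3)

/-- With `β(s) = α(s) + (as+b)T + (cs+d)B + λN` along a unit speed curve `α`
with `κ > 0` and `τ` nowhere zero and `as+b ≠ 0` on `I`: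
`⟨β', N⟩ ≡ 0` on `I` (i.e. `β` and the tangent indicatrix are an
involute–evolute pair) iff `κ/τ = (cs+d)/(as+b)` on `I`. -/
theorem stmt_7 (I : Set ℝ) (α T N B : ℝ → E3) (κ τ : ℝ → ℝ) (a b c d lam : ℝ)
    (hα : ∀ s ∈ I, HasDerivAt α (T s) s)
    (hT : ∀ s ∈ I, HasDerivAt T (κ s • N s) s)
    (hN : ∀ s ∈ I, HasDerivAt N (-(κ s) • T s + τ s • B s) s)
    (hB : ∀ s ∈ I, HasDerivAt B (-(τ s) • N s) s)
    (hκpos : ∀ s ∈ I, 0 < κ s) (hτne : ∀ s ∈ I, τ s ≠ 0)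
    (hab : ∀ s ∈ I, a * s + b ≠ 0)
    (hTunit : ∀ s, ‖T s‖ = 1) (hNunit : ∀ s, ‖N s‖ = 1) (hBunit : ∀ s, ‖B s‖ = 1)
    (hTN : ∀ s, (inner ℝ (T s) (N s) : ℝ) = 0)
    (hTB : ∀ s, (inner ℝ (T s) (B s) : ℝ) = 0)
    (hNB : ∀ s, (inner ℝ (N s) (B s) : ℝ) = 0)
    (β : ℝ → E3)
    (hβ : ∀ s, β s = α s + (a * s + b) • T s + (c * s + d) • B s + lam • N s) :
    (∀ s ∈ I, (inner ℝ (deriv β s) (N s) : ℝ) = 0) ↔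
      (∀ s ∈ I, κ s / τ s = (c * s + d) / (a * s + b)) := by
  have key : ∀ s ∈ I, (inner ℝ (deriv β s) (N s) : ℝ)
      = (a * s + b) * κ s - (c * s + d) * τ s := by
    intro s hs
    have h1 := hα s hs
    have h2 := hT s hs
    have h3 := hN s hs
    have h4 := hB s hs
    have hf1 : HasDerivAt (fun x : ℝ => a * x + b) a s := by
      simpa using ((hasDerivAt_id s).const_mul a).add_const b
    have hf2 : HasDerivAt (fun x : ℝ => c * x + d) c s := by
      simpa using ((hasDerivAt_id s).const_mul c).add_const d
    have hβfun : β = fun x => α x + (a * x + b) • T x + (c * x + d) • B x + lam • N x :=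
      funext hβ
    have hβ' : HasDerivAt β
        (T s + (a • T s + (a * s + b) • (κ s • N s))
          + (c • B s + (c * s + d) • (-(τ s) • N s))
          + lam • (-(κ s) • T s + τ s • B s)) s := by
      rw [hβfun]
      have H := ((h1.add (hf1.smul h2)).add (hf2.smul h4)).add (h3.const_smul lam)
      refine H.congr_deriv ?_
      module
    rw [hβ'.deriv]
    have hNN : (inner ℝ (N s) (N s) : ℝ) = 1 := by
      rw [real_inner_self_eq_norm_sq, hNunit]; norm_num
    have hBN : (inner ℝ (B s) (N s) : ℝ) = 0 := by rw [real_inner_comm]; exact hNB s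
    simp only [inner_add_left, real_inner_smul_left, smul_smul, hTN, hBN, hNN]
    ring
  constructor
  · intro h s hs
    have := (key s hs).symm.trans (h s hs)
    have hτ := hτne s hs
    have hab' := hab s hs
    rw [div_eq_div_iff hτ hab']
    nlinarith [this]
  · intro h s hs
    have h2 := h s hs
    have hτ := hτne s hs
    have hab' := hab s hs
    rw [div_eq_div_iff hτ hab'] at h2
    rw [key s hs]
    nlinarith [h2]
end

section
/- Let α be a unit speed curve in E³ with W(s) = τT + κB. If W'' is everywhere parallel to the principal normal N (i.e. W''(s) = λ(s)N(s) for some scalar function λ), then τ'' ≡ 0 and κ'' ≡ 0, so κ(s) = as + b and τ(s) = cs + d are linear functions of arc length; i.e., α is an Euler spiral in E³. -/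
lemma affine_of_deriv2_zero (f f' f'' : ℝ → ℝ)
    (hf : ∀ s, HasDerivAt f (f' s) s) (hf' : ∀ s, HasDerivAt f' (f'' s) s)
    (h0 : ∀ s, f'' s = 0) : ∀ s, f s = f' 0 * s + f 0 := by
  have hconst : ∀ s, f' s = f' 0 := by
    intro s
    exact is_const_of_deriv_eq_zero (fun x => (hf' x).differentiableAt)
      (fun x => by rw [(hf' x).deriv, h0]) s 0
  intro s
  have hg : ∀ x, HasDerivAt (fun t => f t - f' 0 * t) 0 x := by
    intro x
    have := (hf x).sub ((hasDerivAt_id x).const_mul (f' 0))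
    exact this.congr_deriv (by simp [hconst x])
  have := is_const_of_deriv_eq_zero (f := fun t => f t - f' 0 * t)
    (fun x => (hg x).differentiableAt) (fun x => (hg x).deriv) s 0
  simp only [mul_zero, sub_zero] at this
  linarith

/-- If for `W = τT + κB` along a unit speed curve the second derivative `W''`
is everywhere parallel to the principal normal `N` (`W'' = λ(s)N(s)`), then
`τ'' ≡ 0` and `κ'' ≡ 0`, so `κ(s) = as + b` and `τ(s) = cs + d`:
the curve is an Euler spiral in `E³`. -/
theorem stmt_10 (α T N B : ℝ → E3) (κ τ κ' τ' κ'' τ'' l : ℝ → ℝ)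
    (hα : ∀ s, HasDerivAt α (T s) s)
    (hT : ∀ s, HasDerivAt T (κ s • N s) s)
    (hN : ∀ s, HasDerivAt N (-(κ s) • T s + τ s • B s) s)
    (hB : ∀ s, HasDerivAt B (-(τ s) • N s) s)
    (hκpos : ∀ s, 0 < κ s)
    (hTunit : ∀ s, ‖T s‖ = 1) (hNunit : ∀ s, ‖N s‖ = 1) (hBunit : ∀ s, ‖B s‖ = 1)
    (hTN : ∀ s, (inner ℝ (T s) (N s) : ℝ) = 0)
    (hTB : ∀ s, (inner ℝ (T s) (B s) : ℝ) = 0)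
    (hNB : ∀ s, (inner ℝ (N s) (B s) : ℝ) = 0)
    (hnothelix : ¬ ∃ lam : ℝ, ∀ s, τ s = lam * κ s)
    (hκ' : ∀ s, HasDerivAt κ (κ' s) s) (hτ' : ∀ s, HasDerivAt τ (τ' s) s)
    (hκ'' : ∀ s, HasDerivAt κ' (κ'' s) s) (hτ'' : ∀ s, HasDerivAt τ' (τ'' s) s)
    (W : ℝ → E3) (hW : ∀ s, W s = τ s • T s + κ s • B s)
    (hWgeo : ∀ s, HasDerivAt (fun t => τ' t • T t + κ' t • B t) (l s • N s) s) :
    (∀ s, τ'' s = 0) ∧ (∀ s, κ'' s = 0) ∧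
      ∃ a b c d : ℝ, (∀ s, κ s = a * s + b) ∧ (∀ s, τ s = c * s + d) := by
  have key : ∀ s, τ' s • κ s • N s + τ'' s • T s
      + (κ' s • (-(τ s)) • N s + κ'' s • B s) = l s • N s := by
    intro s
    exact (((hτ'' s).smul (hT s)).add ((hκ'' s).smul (hB s))).unique (hWgeo s)
  have hTT : ∀ s, (inner ℝ (T s) (T s) : ℝ) = 1 := fun s => by
    rw [real_inner_self_eq_norm_sq, hTunit]; norm_num
  have hBB : ∀ s, (inner ℝ (B s) (B s) : ℝ) = 1 := fun s => by
    rw [real_inner_self_eq_norm_sq, hBunit]; norm_num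
  have hτ''0 : ∀ s, τ'' s = 0 := by
    intro s
    have := congrArg (fun v => (inner ℝ (T s) v : ℝ)) (key s)
    simp only [inner_add_right, real_inner_smul_right, hTT s, hTN s, hTB s] at this
    linarith
  have hκ''0 : ∀ s, κ'' s = 0 := by
    intro s
    have hBN : (inner ℝ (B s) (N s) : ℝ) = 0 := by rw [real_inner_comm]; exact hNB s
    have hBT : (inner ℝ (B s) (T s) : ℝ) = 0 := by rw [real_inner_comm]; exact hTB s
    have := congrArg (fun v => (inner ℝ (B s) v : ℝ)) (key s)
    simp only [inner_add_right, real_inner_smul_right, hBB s, hBN, hBT] at this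
    linarith
  refine ⟨hτ''0, hκ''0, κ' 0, κ 0, τ' 0, τ 0, ?_, ?_⟩
  · exact affine_of_deriv2_zero κ κ' κ'' hκ' hκ'' hκ''0
  · exact affine_of_deriv2_zero τ τ' τ'' hτ' hτ'' hτ''0
end

section
/- Let α be a unit speed curve with κ > 0, τ nowhere zero, and β(s) = α(s) + (as+b)T + (cs+d)B + λN. The curve β is an involute-evolute partner of the binormal indicatrix (B) of α (whose unit tangent is −N) if and only if κ(s)(as+b) = τ(s)(cs+d) for all s, i.e. κ/τ = (cs+d)/(as+b). -/
/-- With `β(s) = α(s) + (as+b)T + (cs+d)B + λN` along a unit speed curve with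
`κ > 0` and `τ` nowhere zero: `β` is an involute–evolute partner of the
binormal indicatrix (whose unit tangent is `−N`), i.e. `⟨β', N⟩ ≡ 0`, iff
`κ(s)(as+b) = τ(s)(cs+d)` for all `s` (i.e. `κ/τ = (cs+d)/(as+b)`). -/
theorem stmt_13 (I : Set ℝ) (α T N B : ℝ → E3) (κ τ : ℝ → ℝ) (a b c d lam : ℝ)
    (hα : ∀ s ∈ I, HasDerivAt α (T s) s)
    (hT : ∀ s ∈ I, HasDerivAt T (κ s • N s) s)
    (hN : ∀ s ∈ I, HasDerivAt N (-(κ s) • T s + τ s • B s) s)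
    (hB : ∀ s ∈ I, HasDerivAt B (-(τ s) • N s) s)
    (hκpos : ∀ s ∈ I, 0 < κ s) (hτne : ∀ s ∈ I, τ s ≠ 0)
    (hTunit : ∀ s, ‖T s‖ = 1) (hNunit : ∀ s, ‖N s‖ = 1) (hBunit : ∀ s, ‖B s‖ = 1)
    (hTN : ∀ s, (inner ℝ (T s) (N s) : ℝ) = 0)
    (hTB : ∀ s, (inner ℝ (T s) (B s) : ℝ) = 0)
    (hNB : ∀ s, (inner ℝ (N s) (B s) : ℝ) = 0)
    (β : ℝ → E3)
    (hβ : ∀ s, β s = α s + (a * s + b) • T s + (c * s + d) • B s + lam • N s) :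
    (∀ s ∈ I, (inner ℝ (deriv β s) (N s) : ℝ) = 0) ↔
      (∀ s ∈ I, κ s * (a * s + b) = τ s * (c * s + d)) := by
  have key : ∀ s ∈ I, (inner ℝ (deriv β s) (N s) : ℝ)
      = κ s * (a * s + b) - τ s * (c * s + d) := by
    intro s hs
    have hβfun : β = fun s => α s + (a * s + b) • T s + (c * s + d) • B s + lam • N s :=
      funext hβ
    have h1 : HasDerivAt (fun s => a * s + b) a s := by
      simpa using ((hasDerivAt_id s).const_mul a).add_const b
    have h2 : HasDerivAt (fun s => c * s + d) c s := by
      simpa using ((hasDerivAt_id s).const_mul c).add_const d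
    have hd : HasDerivAt β
        (T s + ((a * s + b) • (κ s • N s) + a • T s)
          + ((c * s + d) • (-(τ s) • N s) + c • B s)
          + lam • (-(κ s) • T s + τ s • B s)) s := by
      rw [hβfun]
      exact (((hα s hs).add (h1.smul (hT s hs))).add (h2.smul (hB s hs))).add
        ((hN s hs).const_smul lam)
    rw [hd.deriv]
    have hNN : (inner ℝ (N s) (N s) : ℝ) = 1 := by
      rw [real_inner_self_eq_norm_sq, hNunit]; norm_num
    have hBN : (inner ℝ (B s) (N s) : ℝ) = 0 := by
      rw [real_inner_comm]; exact hNB s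
    simp only [inner_add_left, real_inner_smul_left, inner_neg_left, inner_smul_left,
      RCLike.star_def, conj_trivial, hTN, hBN, hNN]
    ring
  constructor
  · intro h s hs
    have k := key s hs
    have h0 := h s hs
    linarith
  · intro h s hs
    have k := key s hs
    have h0 := h s hs
    linarith
end
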